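/- Let θ₁, θ₂, θ₁₂ > 0 and let T₁, T₂, U be independent random variables on a probability space, where P(Tᵢ > t) = exp(−θᵢ t) for all t ≥ 0 (i = 1, 2) and U is uniformly distributed on (0,1). With Q(u) = −ln(1−u)/θ₁₂, R = min(T₁, Q(U)) and S = min(T₂, Q(1−U)), for all r, s ≥ 0 one has P(R > r, S > s) = exp(−θ₁ r − θ₂ s) · max(exp(−θ₁₂ r) + exp(−θ₁₂ s) − 1, 0). -/

import Mathlib

open MeasureTheory ProbabilityTheory Real

/-- The joint survival function of the bivariate negative Marshall–Olkin model
`(R,S) = (min(T₁,Q(U)), min(T₂,Q(1−U)))` equals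
`exp(−θ₁r−θ₂s)·max(exp(−θ₁₂r)+exp(−θ₁₂s)−1, 0)`. -/
theorem bnmo_survival
    {Ω : Type*} [MeasureSpace Ω] [IsProbabilityMeasure (ℙ : Measure Ω)]
    (θ1 θ2 θ12 : ℝ) (hθ1 : 0 < θ1) (hθ2 : 0 < θ2) (hθ12 : 0 < θ12)
    (T1 T2 U : Ω → ℝ)
    (hT1m : Measurable T1) (hT2m : Measurable T2) (hUm : Measurable U)
    (hindep : iIndepFun ![T1, T2, U] ℙ)
    (hT1 : ∀ t : ℝ, 0 ≤ t → ℙ {ω | T1 ω > t} = ENNReal.ofReal (exp (-θ1 * t)))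
    (hT2 : ∀ t : ℝ, 0 ≤ t → ℙ {ω | T2 ω > t} = ENNReal.ofReal (exp (-θ2 * t)))
    (hU : Measure.map U ℙ = volume.restrict (Set.Ioo (0 : ℝ) 1))
    (Q : ℝ → ℝ) (hQ : ∀ u : ℝ, Q u = -Real.log (1 - u) / θ12)
    (R S : Ω → ℝ)
    (hR : ∀ ω, R ω = min (T1 ω) (Q (U ω)))
    (hS : ∀ ω, S ω = min (T2 ω) (Q (1 - U ω))) :
    ∀ r s : ℝ, 0 ≤ r → 0 ≤ s →
      ℙ {ω | R ω > r ∧ S ω > s} =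
        ENNReal.ofReal (exp (-θ1 * r - θ2 * s) *
          max (exp (-θ12 * r) + exp (-θ12 * s) - 1) 0) := by
  intro r s hr hs
  set a := 1 - exp (-θ12 * r) with ha
  set b := exp (-θ12 * s) with hb
  have ha0 : 0 ≤ a := by
    have : exp (-θ12 * r) ≤ 1 := Real.exp_le_one_iff.mpr (by nlinarith)
    linarith
  have hb1 : b ≤ 1 := Real.exp_le_one_iff.mpr (by nlinarith)
  have hQm : Measurable Q := by
    have : Q = fun u => -Real.log (1 - u) / θ12 := funext hQ
    rw [this]
    exact (Real.measurable_log.comp (measurable_const.sub measurable_id)).neg.div_const _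
  set B : Set ℝ := {u | r < Q u ∧ s < Q (1 - u)} with hBdef
  have hBm : MeasurableSet B := by
    rw [hBdef, Set.setOf_and]
    exact (measurableSet_lt measurable_const hQm).inter
      (measurableSet_lt measurable_const (hQm.comp (measurable_const.sub measurable_id)))
  -- independence
  rw [iIndepFun_iff_measure_inter_preimage_eq_mul] at hindep
  have hmeas : ∀ i ∈ Finset.univ, MeasurableSet ((![Set.Ioi r, Set.Ioi s, B] : Fin 3 → Set ℝ) i) := by
    intro i _
    fin_cases i
    · exact measurableSet_Ioi
    · exact measurableSet_Ioi
    · exact hBm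
  have key := hindep Finset.univ hmeas
  have hI : (⋂ i ∈ Finset.univ, ![T1, T2, U] i ⁻¹' (![Set.Ioi r, Set.Ioi s, B] : Fin 3 → Set ℝ) i)
      = {ω | R ω > r ∧ S ω > s} := by
    ext ω
    simp only [Set.mem_iInter, Set.mem_preimage, Set.mem_setOf_eq, Finset.mem_univ, true_implies]
    constructor
    · intro h
      have h0 := h 0; have h1 := h 1; have h2 := h 2
      simp only [Matrix.cons_val_zero, Matrix.cons_val_one, Matrix.head_cons, Matrix.cons_val_two,
        Matrix.tail_cons, Set.mem_Ioi, Set.mem_setOf_eq, hBdef] at h0 h1 h2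
      exact ⟨by rw [hR]; exact lt_min_iff.mpr ⟨h0, h2.1⟩,
        by rw [hS]; exact lt_min_iff.mpr ⟨h1, h2.2⟩⟩
    · rintro ⟨hRr, hSs⟩
      rw [hR] at hRr; rw [hS] at hSs
      rw [gt_iff_lt, lt_min_iff] at hRr hSs
      intro i
      fin_cases i <;>
        simp only [Matrix.cons_val_zero, Matrix.cons_val_one, Matrix.head_cons, Matrix.cons_val_two,
          Matrix.tail_cons, Set.mem_Ioi, Set.mem_setOf_eq, hBdef, Fin.isValue] <;>
        first
          | exact hRr.1
          | exact hSs.1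
          | exact ⟨hRr.2, hSs.2⟩
  rw [hI, Fin.prod_univ_three] at key
  simp only [Matrix.cons_val_zero, Matrix.cons_val_one, Matrix.head_cons,
    Matrix.cons_val_two, Matrix.tail_cons] at key
  have h1 : ℙ (T1 ⁻¹' Set.Ioi r) = ENNReal.ofReal (exp (-θ1 * r)) := hT1 r hr
  have h2 : ℙ (T2 ⁻¹' Set.Ioi s) = ENNReal.ofReal (exp (-θ2 * s)) := hT2 s hs
  have hUB : ℙ (U ⁻¹' B) = ENNReal.ofReal (b - a) := by
    rw [← Measure.map_apply hUm hBm, hU, Measure.restrict_apply hBm]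
    have hEq : B ∩ Set.Ioo 0 1 = Set.Ioo a b := by
      ext u
      simp only [Set.mem_inter_iff, Set.mem_setOf_eq, Set.mem_Ioo, hBdef]
      constructor
      · rintro ⟨⟨hq1, hq2⟩, hu0, hu1⟩
        rw [hQ] at hq1 hq2
        have e1 : r * θ12 < -Real.log (1 - u) := (lt_div_iff₀ hθ12).mp hq1
        have e2 : Real.log (1 - u) < -θ12 * r := by linarith
        have e3 : 1 - u < exp (-θ12 * r) := (Real.log_lt_iff_lt_exp (by linarith)).mp e2
        have f1 : s * θ12 < -Real.log (1 - (1 - u)) := (lt_div_iff₀ hθ12).mp hq2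
        have f2 : Real.log u < -θ12 * s := by
          have : (1 : ℝ) - (1 - u) = u := by ring
          rw [this] at f1; linarith
        have f3 : u < exp (-θ12 * s) := (Real.log_lt_iff_lt_exp hu0).mp f2
        exact ⟨by linarith, f3⟩
      · rintro ⟨hau, hub⟩
        have hu0 : 0 < u := lt_of_le_of_lt ha0 hau
        have hu1 : u < 1 := lt_of_lt_of_le hub hb1
        have e3 : 1 - u < exp (-θ12 * r) := by rw [ha] at hau; linarith
        have e2 : Real.log (1 - u) < -θ12 * r := (Real.log_lt_iff_lt_exp (by linarith)).mpr e3
        have hq1 : r < Q u := by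
          rw [hQ, lt_div_iff₀ hθ12]; linarith
        have f2 : Real.log u < -θ12 * s := (Real.log_lt_iff_lt_exp hu0).mpr hub
        have hq2 : s < Q (1 - u) := by
          rw [hQ, lt_div_iff₀ hθ12]
          have : (1 : ℝ) - (1 - u) = u := by ring
          rw [this]; linarith
        exact ⟨⟨hq1, hq2⟩, hu0, hu1⟩
    rw [hEq, Real.volume_Ioo]
  rw [key, h1, h2, hUB, ← ENNReal.ofReal_mul (Real.exp_pos _).le,
    ← ENNReal.ofReal_mul (by positivity)]
  have hexp : exp (-θ1 * r) * exp (-θ2 * s) = exp (-θ1 * r - θ2 * s) := by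
    rw [← Real.exp_add]; ring_nf
  rw [hexp]
  rcases le_total 0 (exp (-θ12 * r) + exp (-θ12 * s) - 1) with h | h
  · rw [max_eq_left h]
    congr 1
    rw [ha, hb]; ring
  · rw [max_eq_right h, mul_zero, ENNReal.ofReal_zero]
    apply ENNReal.ofReal_eq_zero.mpr
    have : b - a ≤ 0 := by rw [ha, hb]; linarith
    nlinarith [Real.exp_pos (-θ1 * r - θ2 * s)]
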